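/- Let K be a field, m ≥ n, 1 ≤ f ≤ ⌊n/2⌋, and let c := (1,1',2,2',…,f,f') and ĉ := (f+1,(f+1)',…,2f,(2f)') be multi-indices in I(2m,2f). Let λ^{(1)} be the weight of v_ĉ ∈ V^{⊗2f}. Then the λ^{(1)}-weight component of v_c·(e_1 e_3 ⋯ e_{2f−1}) in V^{⊗2f} equals (−1)^f Σ_{ψ∈Ψ} v_ĉ·ψ = (−1)^f Σ_{ψ∈Ψ} (−1)^{ℓ(ψ)} v_{ĉ·ψ}, where Ψ is the normalizer of the Young subgroup S_{(2^f)} in S_{2f}. -/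

import Mathlib

open scoped BigOperators Classical
open MulOpposite

noncomputable section

namespace SpBrauer

/-- the conjugate index `i' = 2m-1-i` (0-based version of `2m+1-i`). -/
def conjIdx (m : ℕ) (i : Fin (2*m)) : Fin (2*m) :=
  ⟨2*m - 1 - (i : ℕ), by have := i.isLt; omega⟩

/-- the sign `ε_{ij}`. -/
def epsZ (m : ℕ) (i j : Fin (2*m)) : ℤ :=
  if (i : ℕ) + (j : ℕ) + 1 = 2*m then (if (i : ℕ) < (j : ℕ) then 1 else -1) else 0

/-- tensor space `V^{⊗ n}` modelled as the free module on multi-indices. -/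
abbrev Ten (R : Type) (m n : ℕ) : Type := (Fin n → Fin (2*m)) → R

/-- basis tensor `v_{i_1} ⊗ ⋯ ⊗ v_{i_n}`. -/
def dta (R : Type) [CommRing R] (m n : ℕ) (i : Fin n → Fin (2*m)) : Ten R m n :=
  fun a => if a = i then 1 else 0

/-- the linear map on free modules with "matrix" `M`. -/
def funMap (R : Type) [CommRing R] (α β : Type) [Fintype α]
    (M : β → α → R) : (α → R) →ₗ[R] (β → R) where
  toFun f := fun b => ∑ a, M b a * f a
  map_add' f g := by
    funext b
    simp [Pi.add_apply, mul_add, Finset.sum_add_distrib]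
  map_smul' c f := by
    funext b
    simp only [Pi.smul_apply, smul_eq_mul, RingHom.id_apply]
    rw [Finset.mul_sum]
    exact Finset.sum_congr rfl (fun a _ => by ring)

/-- the operator given by the right action of the Brauer algebra generator `s_j`
(`j` is 0-based: `s_j` swaps positions `j` and `j+1` with a sign). -/
def sOp (R : Type) [CommRing R] (m n : ℕ) (j : Fin (n-1)) :
    Ten R m n →ₗ[R] Ten R m n :=
  funMap R _ _ (fun a b =>
    if b = a ∘ (Equiv.swap (⟨(j:ℕ), by have := j.isLt; omega⟩ : Fin n)
        (⟨(j:ℕ)+1, by have := j.isLt; omega⟩ : Fin n)) then -1 else 0)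

/-- the operator given by the right action of the Brauer algebra generator `e_j`. -/
def eOp (R : Type) [CommRing R] (m n : ℕ) (j : Fin (n-1)) :
    Ten R m n →ₗ[R] Ten R m n :=
  funMap R _ _ (fun a b =>
    (if ∀ p : Fin n, p ≠ (⟨(j:ℕ), by have := j.isLt; omega⟩ : Fin n) →
        p ≠ (⟨(j:ℕ)+1, by have := j.isLt; omega⟩ : Fin n) → b p = a p then 1 else 0) *
    (-((epsZ m (a ⟨(j:ℕ), by have := j.isLt; omega⟩) (a ⟨(j:ℕ)+1, by have := j.isLt; omega⟩) : ℤ) : R)) *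
    ((epsZ m (b ⟨(j:ℕ), by have := j.isLt; omega⟩) (b ⟨(j:ℕ)+1, by have := j.isLt; omega⟩) : ℤ) : R))

/-- the (sign-twisted) right place-permutation action of a permutation on tensor space. -/
def permOp (R : Type) [CommRing R] (m n : ℕ) (π : Equiv.Perm (Fin n)) :
    Ten R m n →ₗ[R] Ten R m n :=
  funMap R _ _ (fun a b => if b = a ∘ π then ((Equiv.Perm.sign π : ℤ) : R) else 0)

/-- the `n`-fold tensor power of (the endomorphism of `V` given by) a matrix `g`,
acting diagonally on tensor space. -/
def tenOp (R : Type) [CommRing R] (m n : ℕ) (g : Matrix (Fin (2*m)) (Fin (2*m)) R) :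
    Ten R m n →ₗ[R] Ten R m n :=
  funMap R _ _ (fun a b => ∏ k : Fin n, g (a k) (b k))

/-- the skew-symmetric bilinear form `(v,w)` determined by `(v_i, v_j) = ε_{ij}`. -/
def sform (R : Type) [CommRing R] (m : ℕ) (v w : Fin (2*m) → R) : R :=
  ∑ i, ∑ j, v i * ((epsZ m i j : ℤ) : R) * w j

/-- membership in the symplectic group `Sp(V)` (an invertible linear map preserving the form). -/
def IsSymp (R : Type) [CommRing R] (m : ℕ) (g : Matrix (Fin (2*m)) (Fin (2*m)) R) : Prop :=
  IsUnit g.det ∧ ∀ v w, sform R m (g.mulVec v) (g.mulVec w) = sform R m v w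

/-- membership in the symplectic similitude group `GSp(V)`. -/
def IsGSymp (R : Type) [CommRing R] (m : ℕ) (g : Matrix (Fin (2*m)) (Fin (2*m)) R) : Prop :=
  IsUnit g.det ∧ ∃ d : R, d ≠ 0 ∧ ∀ v w, sform R m (g.mulVec v) (g.mulVec w) = d * sform R m v w

/-! ### The Brauer algebra, by generators and relations -/

/-- generators of the Brauer algebra `B_n(x)`:  `s i` and `e i` for `i = 0, …, n-2`
(0-based versions of `s_1, …, s_{n-1}`, `e_1, …, e_{n-1}`). -/
inductive BGen (n : ℕ) : Type
  | s : Fin (n-1) → BGen n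
  | e : Fin (n-1) → BGen n

/-- the defining relations of the Brauer algebra `B_n(x)`. -/
inductive BRel (R : Type) [CommRing R] (x : R) (n : ℕ) :
    FreeAlgebra R (BGen n) → FreeAlgebra R (BGen n) → Prop
  | ss (i : Fin (n-1)) :
      BRel R x n (FreeAlgebra.ι R (BGen.s i) * FreeAlgebra.ι R (BGen.s i)) 1
  | ee (i : Fin (n-1)) :
      BRel R x n (FreeAlgebra.ι R (BGen.e i) * FreeAlgebra.ι R (BGen.e i))
        (x • FreeAlgebra.ι R (BGen.e i))
  | es (i : Fin (n-1)) :
      BRel R x n (FreeAlgebra.ι R (BGen.e i) * FreeAlgebra.ι R (BGen.s i))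
        (FreeAlgebra.ι R (BGen.e i))
  | se (i : Fin (n-1)) :
      BRel R x n (FreeAlgebra.ι R (BGen.s i) * FreeAlgebra.ι R (BGen.e i))
        (FreeAlgebra.ι R (BGen.e i))
  | ssComm (i j : Fin (n-1)) (h : (i:ℕ)+1 < (j:ℕ)) :
      BRel R x n (FreeAlgebra.ι R (BGen.s i) * FreeAlgebra.ι R (BGen.s j))
        (FreeAlgebra.ι R (BGen.s j) * FreeAlgebra.ι R (BGen.s i))
  | seComm (i j : Fin (n-1)) (h : (i:ℕ)+1 < (j:ℕ)) :
      BRel R x n (FreeAlgebra.ι R (BGen.s i) * FreeAlgebra.ι R (BGen.e j))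
        (FreeAlgebra.ι R (BGen.e j) * FreeAlgebra.ι R (BGen.s i))
  | eeComm (i j : Fin (n-1)) (h : (i:ℕ)+1 < (j:ℕ)) :
      BRel R x n (FreeAlgebra.ι R (BGen.e i) * FreeAlgebra.ι R (BGen.e j))
        (FreeAlgebra.ι R (BGen.e j) * FreeAlgebra.ι R (BGen.e i))
  | braid (i j : Fin (n-1)) (h : (j:ℕ) = (i:ℕ)+1) :
      BRel R x n
        (FreeAlgebra.ι R (BGen.s i) * FreeAlgebra.ι R (BGen.s j) * FreeAlgebra.ι R (BGen.s i))
        (FreeAlgebra.ι R (BGen.s j) * FreeAlgebra.ι R (BGen.s i) * FreeAlgebra.ι R (BGen.s j))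
  | eje (i j : Fin (n-1)) (h : (j:ℕ) = (i:ℕ)+1) :
      BRel R x n
        (FreeAlgebra.ι R (BGen.e i) * FreeAlgebra.ι R (BGen.e j) * FreeAlgebra.ι R (BGen.e i))
        (FreeAlgebra.ι R (BGen.e i))
  | eje' (i j : Fin (n-1)) (h : (j:ℕ) = (i:ℕ)+1) :
      BRel R x n
        (FreeAlgebra.ι R (BGen.e j) * FreeAlgebra.ι R (BGen.e i) * FreeAlgebra.ι R (BGen.e j))
        (FreeAlgebra.ι R (BGen.e j))
  | see (i j : Fin (n-1)) (h : (j:ℕ) = (i:ℕ)+1) :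
      BRel R x n
        (FreeAlgebra.ι R (BGen.s i) * FreeAlgebra.ι R (BGen.e j) * FreeAlgebra.ι R (BGen.e i))
        (FreeAlgebra.ι R (BGen.s j) * FreeAlgebra.ι R (BGen.e i))
  | ees (i j : Fin (n-1)) (h : (j:ℕ) = (i:ℕ)+1) :
      BRel R x n
        (FreeAlgebra.ι R (BGen.e j) * FreeAlgebra.ι R (BGen.e i) * FreeAlgebra.ι R (BGen.s j))
        (FreeAlgebra.ι R (BGen.e j) * FreeAlgebra.ι R (BGen.s i))

/-- the Brauer algebra `B_n(x)` over `R`, presented by generators and relations. -/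
abbrev BrauerAlg (R : Type) [CommRing R] (x : R) (n : ℕ) : Type := RingQuot (BRel R x n)

/-- the generator `s_i` of the Brauer algebra (0-based index). -/
def bS (R : Type) [CommRing R] (x : R) (n : ℕ) (i : Fin (n-1)) : BrauerAlg R x n :=
  RingQuot.mkAlgHom R (BRel R x n) (FreeAlgebra.ι R (BGen.s i))

/-- the generator `e_i` of the Brauer algebra (0-based index). -/
def bE (R : Type) [CommRing R] (x : R) (n : ℕ) (i : Fin (n-1)) : BrauerAlg R x n :=
  RingQuot.mkAlgHom R (BRel R x n) (FreeAlgebra.ι R (BGen.e i))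

/-- the element `E_f = e_1 e_3 ⋯ e_{2f-1}` of the Brauer algebra. -/
def EfB (R : Type) [CommRing R] (x : R) (n f : ℕ) (hf : 2*f ≤ n) : BrauerAlg R x n :=
  (List.ofFn (fun i : Fin f => bE R x n ⟨2*(i:ℕ), by have := i.isLt; omega⟩)).prod

/-- the two-sided ideal `B^{(f)}` of the Brauer algebra generated by `E_f`
(it is `0` when `2f > n`, matching the convention of the paper). -/
def Bideal (R : Type) [CommRing R] (x : R) (n f : ℕ) : Submodule R (BrauerAlg R x n) :=
  Submodule.span R {y | ∃ (hf : 2*f ≤ n) (a b : BrauerAlg R x n), y = a * EfB R x n f hf * b}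

/-- the operator on tensor space given by the right action of `E_f = e_1e_3⋯e_{2f-1}`. -/
def EfOp (R : Type) [CommRing R] (m n f : ℕ) (hf : 2*f ≤ n) :
    Module.End R (Ten R m n) :=
  (List.ofFn (fun i : Fin f => eOp R m n ⟨2*(i:ℕ), by have := i.isLt; omega⟩)).prod

/-! ### Combinatorial predicates -/

/-- `σ ∈ S_{{2f+1, …, n}}`, i.e. `σ` fixes `1, …, 2f` pointwise (0-based). -/
def FixLow (n f : ℕ) (σ : Equiv.Perm (Fin n)) : Prop :=
  ∀ a : Fin n, (a:ℕ) < 2*f → σ a = a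

/-- `σ ∈ S_{2f} = S_{{1, …, 2f}}`, i.e. `σ` fixes `2f+1, …, n` pointwise (0-based). -/
def FixHigh (n f : ℕ) (σ : Equiv.Perm (Fin n)) : Prop :=
  ∀ a : Fin n, 2*f ≤ (a:ℕ) → σ a = a

/-- membership in `D_{ν_f}`:  the bitableau `t^{ν_f}·d` is row standard and the first
column of its first component is increasing (everything 0-based; `d a` is the entry
at the cell of `t^{ν_f}` containing `a`). -/
def DnuP (n f : ℕ) (d : Equiv.Perm (Fin n)) : Prop :=
  (∀ a b : Fin n, (a:ℕ) % 2 = 0 → (b:ℕ) = (a:ℕ)+1 → (b:ℕ) < 2*f → d a < d b) ∧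
  (∀ a b : Fin n, (a:ℕ) % 2 = 0 → (b:ℕ) % 2 = 0 → (a:ℕ) < (b:ℕ) → (b:ℕ) < 2*f → d a < d b) ∧
  (∀ a b : Fin n, 2*f ≤ (a:ℕ) → (b:ℕ) = (a:ℕ)+1 → d a < d b)

/-- membership in `D_f = D_{ν_f} ∩ S_{2f}`. -/
def DfP (n f : ℕ) (d : Equiv.Perm (Fin n)) : Prop :=
  DnuP n f d ∧ FixHigh n f d

/-- membership in the row stabilizer `S_{(2^f)}` of the initial `(2^f)`-tableau
(whose rows are `{1,2}, {3,4}, …, {2f-1,2f}`), inside `S_{2f} ≤ S_n`. -/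
def RowStabP (n f : ℕ) (w : Equiv.Perm (Fin n)) : Prop :=
  FixHigh n f w ∧ ∀ a : Fin n, ((w a : ℕ))/2 = (a:ℕ)/2

/-- membership in `Ψ`, the normalizer of `S_{(2^f)}` in `S_{2f}`. -/
def PsiP (n f : ℕ) (z : Equiv.Perm (Fin n)) : Prop :=
  FixHigh n f z ∧ ∀ w, RowStabP n f w ↔ RowStabP n f (z * w * z⁻¹)

/-- `d_J` for a `2f`-element subset `J ⊆ {1, …, n}`:  the unique permutation
enumerating `J` increasingly on the first `2f` positions and the complement of `J`
increasingly on the remaining positions. -/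
def IsdJ (n f : ℕ) (J : Finset (Fin n)) (d : Equiv.Perm (Fin n)) : Prop :=
  (∀ a : Fin n, ((a:ℕ) < 2*f → d a ∈ J) ∧ (2*f ≤ (a:ℕ) → d a ∉ J)) ∧
  (∀ a b : Fin n, (a:ℕ) < (b:ℕ) → (b:ℕ) < 2*f → d a < d b) ∧
  (∀ a b : Fin n, 2*f ≤ (a:ℕ) → (a:ℕ) < (b:ℕ) → d a < d b)

/-- membership in `S_{(2f, n-2f)} = S_{{1,…,2f}} × S_{{2f+1,…,n}}`. -/
def BlockP (n f : ℕ) (d : Equiv.Perm (Fin n)) : Prop :=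
  ∀ a : Fin n, (a:ℕ) < 2*f ↔ ((d a : ℕ)) < 2*f

/-- the multi-index `c = (1, 1', 2, 2', …, f, f')`, completed by an
arbitrary multi-index `kk` on the positions `> 2f`. -/
def cIdx (m n f : ℕ) (hfm : f ≤ m) (kk : Fin n → Fin (2*m)) : Fin n → Fin (2*m) :=
  fun p => if h : (p:ℕ) < 2*f then
    (if (p:ℕ) % 2 = 0 then (⟨(p:ℕ)/2, by omega⟩ : Fin (2*m))
     else conjIdx m ⟨(p:ℕ)/2, by omega⟩)
  else kk p

/-- the multi-index `ĉ = (f+1, (f+1)', …, 2f, (2f)') ∈ I(2m, 2f)`. -/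
def cHatIdx (m f : ℕ) (hfm : 2*f ≤ m) : Fin (2*f) → Fin (2*m) :=
  fun p => if (p:ℕ) % 2 = 0 then (⟨f + (p:ℕ)/2, by have := p.isLt; omega⟩ : Fin (2*m))
           else conjIdx m ⟨f + (p:ℕ)/2, by have := p.isLt; omega⟩

/-- membership in `I_f` (only the values at positions `> 2f` matter):
`2f+1 ≤ kk p ≤ m` (1-based) for all positions `p > 2f`. -/
def IfP (m n f : ℕ) (kk : Fin n → Fin (2*m)) : Prop :=
  ∀ p : Fin n, 2*f ≤ (p:ℕ) → 2*f ≤ ((kk p : ℕ)) ∧ ((kk p : ℕ)) < m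

/-- the weight of a multi-index. -/
def wtOf (m k : ℕ) (a : Fin k → Fin (2*m)) : Fin (2*m) → ℕ :=
  fun j => (Finset.univ.filter (fun p => a p = j)).card

/-- the weight-`μ` component of an element of tensor space. -/
def wcomp (R : Type) [CommRing R] (m k : ℕ) (μ : Fin (2*m) → ℕ) (w : Ten R m k) :
    Ten R m k :=
  fun a => if wtOf m k a = μ then w a else 0

/-- partial sums of a partition. -/
def psum (l : ℕ → ℕ) (r : ℕ) : ℕ := ∑ i ∈ Finset.range r, l i

/-- `l` represents a partition of `n - 2f` (parts listed weakly decreasingly). -/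
def PartP (n f : ℕ) (l : ℕ → ℕ) : Prop :=
  (∀ i, l (i+1) ≤ l i) ∧ psum l n = n - 2*f ∧ ∀ i, n ≤ i → l i = 0

/-- membership in the Young subgroup `S_λ ≤ S_{{2f+1, …, n}}` stabilizing the rows of
the initial `λ`-tableau `t^λ` (with entries `2f+1, …, n`). -/
def InSlam (n f : ℕ) (l : ℕ → ℕ) (w : Equiv.Perm (Fin n)) : Prop :=
  (∀ a : Fin n, (a:ℕ) < 2*f → w a = a) ∧
  (∀ (a : Fin n) (r : ℕ), 2*f + psum l r ≤ (a:ℕ) → (a:ℕ) < 2*f + psum l (r+1) →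
     2*f + psum l r ≤ ((w a : ℕ)) ∧ ((w a : ℕ)) < 2*f + psum l (r+1))

/-- `d = d(t)` for a standard `λ`-tableau `t` with entries `2f+1, …, n`, i.e.
`d ∈ S_{{2f+1,…,n}}` and `t^λ · d` is standard. -/
def StdP (n f : ℕ) (l : ℕ → ℕ) (d : Equiv.Perm (Fin n)) : Prop :=
  FixLow n f d ∧
  (∀ (a b : Fin n) (r c : ℕ), (a:ℕ) = 2*f + psum l r + c → c+1 < l r →
     (b:ℕ) = (a:ℕ)+1 → d a < d b) ∧
  (∀ (a b : Fin n) (r c : ℕ), (a:ℕ) = 2*f + psum l r + c → c < l (r+1) →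
     (b:ℕ) = 2*f + psum l (r+1) + c → d a < d b)

/-- the embedding of the index set of the basis of `V` into that of `Ṽ`
(`v_i ↦ ṽ_i`, `v_{i'} ↦ ṽ_{i'}`). -/
def embIdx (m m0 : ℕ) (h : m ≤ m0) : Fin (2*m) → Fin (2*m0) :=
  fun j => if (j:ℕ) < m then ⟨(j:ℕ), by have := j.isLt; omega⟩
           else ⟨(j:ℕ) + 2*(m0 - m), by have := j.isLt; omega⟩

/-- the inclusion `V^{⊗n} ↪ Ṽ^{⊗n}`. -/
def inclT (R : Type) [CommRing R] (m m0 n : ℕ) (h : m ≤ m0) :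
    Ten R m n →ₗ[R] Ten R m0 n :=
  funMap R _ _ (fun (b : Fin n → Fin (2*m0)) (a : Fin n → Fin (2*m)) =>
    if b = embIdx m m0 h ∘ a then 1 else 0)

/-- the projection `π_K : Ṽ^{⊗n} ↠ V^{⊗n}` killing all basis tensors containing a
factor `ṽ_i` or `ṽ_{i'}` with `m+1 ≤ i ≤ m_0`. -/
def projT (R : Type) [CommRing R] (m m0 n : ℕ) (h : m ≤ m0) :
    Ten R m0 n →ₗ[R] Ten R m n :=
  funMap R _ _ (fun (a : Fin n → Fin (2*m)) (b : Fin n → Fin (2*m0)) =>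
    if b = embIdx m m0 h ∘ a then 1 else 0)


set_option linter.unnecessarySeqFocus false
set_option linter.unreachableTactic false
set_option linter.unusedTactic false

/-- encode a pair position -/
def pairEquiv (f : ℕ) : (Fin f × Bool) ≃ Fin (2*f) where
  toFun x := ⟨2*(x.1:ℕ) + (if x.2 then 1 else 0), by
    have := x.1.isLt; cases x.2 <;> simp <;> omega⟩
  invFun p := (⟨(p:ℕ)/2, by have := p.isLt; omega⟩, decide ((p:ℕ)%2 = 1))
  left_inv := by
    rintro ⟨t, r⟩
    have := t.isLt
    cases r <;> refine Prod.ext ?_ ?_ <;>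
      simp [Fin.ext_iff] <;> omega
  right_inv := by
    intro p
    have := p.isLt
    apply Fin.ext
    rcases Nat.mod_two_eq_zero_or_one (p:ℕ) with h | h <;> simp [h] <;> omega

def boolFlip (c : Bool) : Equiv.Perm Bool := if c then Equiv.swap false true else Equiv.refl Bool

def psiOf (f : ℕ) (σ : Equiv.Perm (Fin f)) (s : Fin f → Bool) : Equiv.Perm (Fin (2*f)) :=
  (pairEquiv f).permCongr
    ((Equiv.prodCongrLeft (fun _ : Bool => σ)) * (Equiv.prodCongrRight (fun t => boolFlip (s t))))

lemma psiOf_val (f : ℕ) (σ : Equiv.Perm (Fin f)) (s : Fin f → Bool) (p : Fin (2*f)) :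
    ((psiOf f σ s p : ℕ)) =
      2*((σ ⟨(p:ℕ)/2, by have := p.isLt; omega⟩ : Fin f) : ℕ) +
        (if s ⟨(p:ℕ)/2, by have := p.isLt; omega⟩ then 1 - (p:ℕ)%2 else (p:ℕ)%2) := by
  have hp := p.isLt
  unfold psiOf
  rw [Equiv.permCongr_apply]
  rcases Nat.mod_two_eq_zero_or_one (p:ℕ) with h | h <;>
    rcases hs : s ⟨(p:ℕ)/2, by omega⟩ with _ | _ <;>
      simp [pairEquiv, Equiv.Perm.mul_apply, boolFlip, h, hs, Equiv.swap_apply_of_ne_of_ne]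

lemma psiOf_sign (f : ℕ) (σ : Equiv.Perm (Fin f)) (s : Fin f → Bool) :
    Equiv.Perm.sign (psiOf f σ s) =
      (-1)^((Finset.univ.filter (fun t => s t = true)).card) := by
  unfold psiOf
  rw [Equiv.Perm.sign_permCongr, map_mul, Equiv.Perm.sign_prodCongrLeft,
    Equiv.Perm.sign_prodCongrRight]
  have h1 : (∏ _k : Bool, Equiv.Perm.sign σ) = 1 := by
    rw [Finset.prod_const]
    simp [sq]
  rw [h1, one_mul]
  have h2 : ∀ t, Equiv.Perm.sign (boolFlip (s t)) = if s t = true then (-1 : ℤˣ) else 1 := by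
    intro t
    unfold boolFlip
    rcases s t <;> simp [Equiv.Perm.sign_swap]
  calc (∏ t, Equiv.Perm.sign (boolFlip (s t)))
      = ∏ t, (if s t = true then (-1 : ℤˣ) else 1) := by
        exact Finset.prod_congr rfl (fun t _ => h2 t)
    _ = (-1)^((Finset.univ.filter (fun t => s t = true)).card) := by
        rw [Finset.prod_ite, Finset.prod_const, Finset.prod_const, one_pow, mul_one]


def PairPres (f : ℕ) (z : Equiv.Perm (Fin (2*f))) : Prop :=
  ∀ p q : Fin (2*f), (p:ℕ)/2 = (q:ℕ)/2 → ((z p : ℕ))/2 = ((z q : ℕ))/2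

lemma fixHigh_triv (f : ℕ) (z : Equiv.Perm (Fin (2*f))) : FixHigh (2*f) f z := by
  intro a ha
  exact absurd a.isLt (by omega)

/-- the partner of a position -/
def partner (f : ℕ) (p : Fin (2*f)) : Fin (2*f) :=
  ⟨2*((p:ℕ)/2) + (1 - (p:ℕ)%2), by have := p.isLt; omega⟩

lemma partner_ne (f : ℕ) (p : Fin (2*f)) : partner f p ≠ p := by
  have := p.isLt
  simp only [partner, Ne, Fin.ext_iff]
  omega

lemma partner_div (f : ℕ) (p : Fin (2*f)) : ((partner f p : ℕ))/2 = (p:ℕ)/2 := by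
  have := p.isLt
  simp only [partner]
  omega

lemma eq_or_eq_of_div_eq {f : ℕ} (p q r : Fin (2*f)) (hpq : (p:ℕ)/2 = (q:ℕ)/2)
    (hpr : (p:ℕ)/2 = (r:ℕ)/2) (hqr : q ≠ r) : p = q ∨ p = r := by
  have h1 := p.isLt; have h2 := q.isLt; have h3 := r.isLt
  rw [Fin.ext_iff]; rw [Fin.ext_iff]
  have : (q:ℕ) ≠ (r:ℕ) := fun h => hqr (Fin.ext h)
  omega

lemma pairPres_inv {f : ℕ} {z : Equiv.Perm (Fin (2*f))} (hz : PairPres f z) :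
    PairPres f z⁻¹ := by
  intro p q h
  set u := z⁻¹ p with hu
  set v := z⁻¹ q with hv
  have hzu : z u = p := by rw [hu]; simp
  have hzv : z v = q := by rw [hv]; simp
  have hdiv : ((z (partner f u) : ℕ))/2 = (p:ℕ)/2 := by
    rw [← hzu]; exact hz _ _ (partner_div f u)
  have hne : z (partner f u) ≠ p := by
    rw [← hzu]
    exact fun hh => partner_ne f u (z.injective hh)
  -- q = p or q = z (partner u)
  rcases eq_or_eq_of_div_eq q p (z (partner f u)) h.symm (h.symm.trans hdiv.symm) (by
      intro hh; exact hne (hh ▸ rfl)) with hq | hq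
  · have : v = u := by rw [hv, hq, hu]
    rw [this]
  · have : v = partner f u := by
      rw [hv, hq]; simp
    rw [this]
    exact (partner_div f u).symm

lemma psiP_of_pairPres {f : ℕ} {z : Equiv.Perm (Fin (2*f))} (hz : PairPres f z) :
    PsiP (2*f) f z := by
  refine ⟨fixHigh_triv f z, fun w => ⟨fun hw => ?_, fun hw => ?_⟩⟩
  · refine ⟨fixHigh_triv f _, fun a => ?_⟩
    have h1 : ((z*w*z⁻¹) a) = z (w (z⁻¹ a)) := rfl
    rw [h1]
    have h2 : ((z (w (z⁻¹ a)) : ℕ))/2 = ((z (z⁻¹ a) : ℕ))/2 := hz _ _ (hw.2 (z⁻¹ a))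
    rw [h2]; simp
  · refine ⟨fixHigh_triv f _, fun a => ?_⟩
    have h1 := hw.2 (z a)
    have h2 : ((z*w*z⁻¹) (z a)) = z (w a) := by simp [Equiv.Perm.mul_apply]
    rw [h2] at h1
    have h3 := pairPres_inv hz (z (w a)) (z a) h1
    simpa using h3

lemma pairPres_of_psiP {f : ℕ} {z : Equiv.Perm (Fin (2*f))} (hz : PsiP (2*f) f z) :
    PairPres f z := by
  intro p q h
  by_cases hpq : p = q
  · rw [hpq]
  · have hw : RowStabP (2*f) f (Equiv.swap p q) := by
      refine ⟨fixHigh_triv f _, fun a => ?_⟩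
      by_cases hap : a = p
      · rw [hap, Equiv.swap_apply_left, ← h]
      · by_cases haq : a = q
        · rw [haq, Equiv.swap_apply_right, h]
        · rw [Equiv.swap_apply_of_ne_of_ne hap haq]
    have h2 := ((hz.2 _).mp hw).2 (z p)
    have h3 : ((z * Equiv.swap p q * z⁻¹) (z p)) = z q := by
      simp [Equiv.Perm.mul_apply]
    rw [h3] at h2
    exact h2.symm


lemma pairPres_psiOf (f : ℕ) (σ : Equiv.Perm (Fin f)) (s : Fin f → Bool) :
    PairPres f (psiOf f σ s) := by
  intro p q h
  rw [psiOf_val, psiOf_val]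
  have hp := p.isLt; have hq := q.isLt
  have : (⟨(p:ℕ)/2, by omega⟩ : Fin f) = ⟨(q:ℕ)/2, by omega⟩ := Fin.ext h
  rw [this]
  rcases hs : s ⟨(q:ℕ)/2, by omega⟩ <;> simp <;> omega

lemma exists_psiOf {f : ℕ} {z : Equiv.Perm (Fin (2*f))} (hz : PairPres f z) :
    ∃ σ s, z = psiOf f σ s := by
  have hparts : ∀ t : Fin f, 2*(t:ℕ) < 2*f ∧ 2*(t:ℕ)+1 < 2*f := fun t => by
    have := t.isLt; omega
  have hpartner : ∀ (x : ℕ) (h1 : 2*x < 2*f) (h2 : 2*x+1 < 2*f),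
      ((z ⟨2*x+1, h2⟩ : ℕ)) = 2*((z ⟨2*x, h1⟩ : ℕ)/2) + (1 - ((z ⟨2*x, h1⟩ : ℕ))%2) := by
    intro x hx1 hx2
    have h1 : ((z ⟨2*x+1, hx2⟩ : ℕ))/2 = ((z ⟨2*x, hx1⟩ : ℕ))/2 := by
      apply hz; simp; omega
    have h2 : ((z ⟨2*x+1, hx2⟩ : ℕ)) ≠ ((z ⟨2*x, hx1⟩ : ℕ)) := by
      intro hh
      have := z.injective (Fin.ext hh : z _ = z _)
      simp only [Fin.mk.injEq] at this
      omega
    have h3 := (z ⟨2*x+1, hx2⟩).isLt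
    have h4 := (z ⟨2*x, hx1⟩).isLt
    omega
  set σ0 : Fin f → Fin f :=
    fun t => ⟨((z ⟨2*(t:ℕ), (hparts t).1⟩ : ℕ))/2, by
      have := (z ⟨2*(t:ℕ), (hparts t).1⟩).isLt; omega⟩ with hσ0
  have hinj : Function.Injective σ0 := by
    intro t t' h
    rw [hσ0] at h
    simp only [Fin.mk.injEq] at h
    by_cases he : ((z ⟨2*(t:ℕ), (hparts t).1⟩ : ℕ)) = ((z ⟨2*(t':ℕ), (hparts t').1⟩ : ℕ))
    · have := z.injective (Fin.ext he : z _ = z _)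
      simp only [Fin.mk.injEq] at this
      apply Fin.ext
      omega
    · have h5 := hpartner (t:ℕ) (hparts t).1 (hparts t).2
      have h6 : ((z ⟨2*(t':ℕ), (hparts t').1⟩ : ℕ)) = ((z ⟨2*(t:ℕ)+1, (hparts t).2⟩ : ℕ)) := by
        have h3 := (z ⟨2*(t':ℕ), (hparts t').1⟩).isLt
        have h4 := (z ⟨2*(t:ℕ), (hparts t).1⟩).isLt
        omega
      have := z.injective (Fin.ext h6 : z _ = z _)
      simp only [Fin.mk.injEq] at this
      omega
  set σ : Equiv.Perm (Fin f) := Equiv.ofBijective σ0 (Finite.injective_iff_bijective.mp hinj)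
    with hσ
  set s : Fin f → Bool := fun t => decide (((z ⟨2*(t:ℕ), (hparts t).1⟩ : ℕ)) % 2 = 1) with hs
  refine ⟨σ, s, ?_⟩
  apply Equiv.ext
  intro p
  have hp := p.isLt
  have hdiv : (p:ℕ)/2 < f := by omega
  have hplo : 2*((p:ℕ)/2) < 2*f := by omega
  have hphi : 2*((p:ℕ)/2)+1 < 2*f := by omega
  apply Fin.ext
  rw [psiOf_val]
  set t : Fin f := ⟨(p:ℕ)/2, hdiv⟩ with ht
  have e1 : ((σ t : Fin f) : ℕ) = ((z ⟨2*((p:ℕ)/2), hplo⟩ : Fin (2*f)).val)/2 := rfl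
  have e2 : s t = decide (((z ⟨2*((p:ℕ)/2), hplo⟩ : Fin (2*f)).val) % 2 = 1) := rfl
  have hzlt := (z ⟨2*((p:ℕ)/2), hplo⟩).isLt
  rcases Nat.mod_two_eq_zero_or_one (p:ℕ) with h | h
  · have hz2 : z p = z ⟨2*((p:ℕ)/2), hplo⟩ := by
      congr 1
      apply Fin.ext
      simp only [Fin.val_mk]
      omega
    rw [hz2, e1, e2]
    rcases Nat.mod_two_eq_zero_or_one ((z ⟨2*((p:ℕ)/2), hplo⟩ : ℕ)) with h2 | h2 <;>
      simp only [h2, h, decide_eq_true_eq] <;> simp <;> omega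
  · have hz2 : z p = z ⟨2*((p:ℕ)/2)+1, hphi⟩ := by
      congr 1
      apply Fin.ext
      simp only [Fin.val_mk]
      omega
    rw [hz2, e1, e2, hpartner ((p:ℕ)/2) hplo hphi]
    rcases Nat.mod_two_eq_zero_or_one ((z ⟨2*((p:ℕ)/2), hplo⟩ : ℕ)) with h2 | h2 <;>
      simp only [h2, h, decide_eq_true_eq] <;> simp <;> omega


lemma cHat_val {m f : ℕ} (hm : 2*f ≤ m) (p : Fin (2*f)) :
    ((cHatIdx m f hm p : ℕ)) =
      if (p:ℕ) % 2 = 0 then f + (p:ℕ)/2 else 2*m - 1 - (f + (p:ℕ)/2) := by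
  unfold cHatIdx conjIdx
  split <;> simp

lemma cHat_inj {m f : ℕ} (hm : 2*f ≤ m) : Function.Injective (cHatIdx m f hm) := by
  intro p q h
  have hv : ((cHatIdx m f hm p : ℕ)) = ((cHatIdx m f hm q : ℕ)) := congrArg _ h
  rw [cHat_val hm p, cHat_val hm q] at hv
  have hp := p.isLt; have hq := q.isLt
  apply Fin.ext
  rcases Nat.mod_two_eq_zero_or_one (p:ℕ) with h1 | h1 <;>
    rcases Nat.mod_two_eq_zero_or_one (q:ℕ) with h2 | h2 <;>
      simp only [h1, h2] at hv <;> simp at hv ⊢ <;> omega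

lemma wtOf_comp_perm {m k : ℕ} (a : Fin k → Fin (2*m)) (π : Equiv.Perm (Fin k)) :
    wtOf m k (a ∘ ⇑π) = wtOf m k a := by
  funext j
  unfold wtOf
  apply Finset.card_bij (fun p _ => π p)
  · intro p hp
    simp only [Finset.mem_filter, Finset.mem_univ, true_and] at hp ⊢
    exact hp
  · intro p _ q _ h
    exact π.injective h
  · intro q hq
    simp only [Finset.mem_filter, Finset.mem_univ, true_and] at hq ⊢
    exact ⟨π⁻¹ q, by simpa using hq, by simp⟩

lemma wt_le_one {m f : ℕ} (hm : 2*f ≤ m) (j : Fin (2*m)) :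
    wtOf m (2*f) (cHatIdx m f hm) j ≤ 1 := by
  unfold wtOf
  apply Finset.card_le_one.mpr
  intro p hp q hq
  simp only [Finset.mem_filter] at hp hq
  exact cHat_inj hm (hp.2.trans hq.2.symm)




lemma psiOf_val_even {f : ℕ} (σ : Equiv.Perm (Fin f)) (s : Fin f → Bool) (t : Fin f)
    (h0 : 2*(t:ℕ) < 2*f) :
    ((psiOf f σ s ⟨2*(t:ℕ), h0⟩ : ℕ)) = 2*((σ t : Fin f):ℕ) + (if s t then 1 else 0) := by
  rw [psiOf_val]
  have e : (⟨((⟨2*(t:ℕ), h0⟩ : Fin (2*f)) : ℕ)/2, by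
      have := (⟨2*(t:ℕ), h0⟩ : Fin (2*f)).isLt; omega⟩ : Fin f) = t := by
    apply Fin.ext; simp only [Fin.val_mk]; omega
  rw [e]
  simp only [Fin.val_mk]
  rcases s t <;> simp <;> omega

lemma psiOf_val_odd {f : ℕ} (σ : Equiv.Perm (Fin f)) (s : Fin f → Bool) (t : Fin f)
    (h1 : 2*(t:ℕ)+1 < 2*f) :
    ((psiOf f σ s ⟨2*(t:ℕ)+1, h1⟩ : ℕ)) = 2*((σ t : Fin f):ℕ) + (if s t then 0 else 1) := by
  rw [psiOf_val]
  have e : (⟨((⟨2*(t:ℕ)+1, h1⟩ : Fin (2*f)) : ℕ)/2, by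
      have := (⟨2*(t:ℕ)+1, h1⟩ : Fin (2*f)).isLt; omega⟩ : Fin f) = t := by
    apply Fin.ext; simp only [Fin.val_mk]; omega
  rw [e]
  simp only [Fin.val_mk]
  rcases s t <;> simp <;> omega

lemma cHat_psiOf_even {m f : ℕ} (hm : 2*f ≤ m) (σ : Equiv.Perm (Fin f)) (s : Fin f → Bool)
    (t : Fin f) (h0 : 2*(t:ℕ) < 2*f) :
    ((cHatIdx m f hm (psiOf f σ s ⟨2*(t:ℕ), h0⟩) : ℕ)) =
      if s t then 2*m - 1 - (f + ((σ t : Fin f):ℕ)) else f + ((σ t : Fin f):ℕ) := by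
  rw [cHat_val, psiOf_val_even σ s t h0]
  have := (σ t).isLt
  rcases hst : s t with _ | _ <;>
    simp only [hst, Bool.false_eq_true, if_true, if_false, ite_true, ite_false] <;>
      split <;> omega

lemma cHat_psiOf_odd {m f : ℕ} (hm : 2*f ≤ m) (σ : Equiv.Perm (Fin f)) (s : Fin f → Bool)
    (t : Fin f) (h1 : 2*(t:ℕ)+1 < 2*f) :
    ((cHatIdx m f hm (psiOf f σ s ⟨2*(t:ℕ)+1, h1⟩) : ℕ)) =
      if s t then f + ((σ t : Fin f):ℕ) else 2*m - 1 - (f + ((σ t : Fin f):ℕ)) := by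
  rw [cHat_val, psiOf_val_odd σ s t h1]
  have := (σ t).isLt
  rcases hst : s t with _ | _ <;>
    simp only [hst, Bool.false_eq_true, if_true, if_false, ite_true, ite_false] <;>
      split <;> omega

lemma eps_good {m f : ℕ} (hm : 2*f ≤ m) (σ : Equiv.Perm (Fin f)) (s : Fin f → Bool)
    (t : Fin f) (h0 : 2*(t:ℕ) < 2*f) (h1 : 2*(t:ℕ)+1 < 2*f) :
    epsZ m (cHatIdx m f hm (psiOf f σ s ⟨2*(t:ℕ), h0⟩))
      (cHatIdx m f hm (psiOf f σ s ⟨2*(t:ℕ)+1, h1⟩)) = if s t then -1 else 1 := by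
  unfold epsZ
  rw [cHat_psiOf_even hm σ s t h0, cHat_psiOf_odd hm σ s t h1]
  have h2 := (σ t).isLt
  have h3 := t.isLt
  rcases s t with _ | _
  · simp only [if_false, Bool.false_eq_true]
    rw [if_pos (by omega), if_pos (by omega)]
  · simp only [if_true]
    rw [if_pos (by omega), if_neg (by omega)]

lemma good_of_wt_eps {m f : ℕ} (hm : 2*f ≤ m) (b : Fin (2*f) → Fin (2*m))
    (hwt : wtOf m (2*f) b = wtOf m (2*f) (cHatIdx m f hm))
    (heps : ∀ (t : Fin f) (h0 : 2*(t:ℕ) < 2*f) (h1 : 2*(t:ℕ)+1 < 2*f),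
      epsZ m (b ⟨2*(t:ℕ), h0⟩) (b ⟨2*(t:ℕ)+1, h1⟩) ≠ 0) :
    ∃ σ s, b = cHatIdx m f hm ∘ ⇑(psiOf f σ s) := by
  have hocc : ∀ p : Fin (2*f), ∃ q : Fin (2*f), cHatIdx m f hm q = b p := by
    intro p
    have h := congrFun hwt (b p)
    unfold wtOf at h
    have h1 : 0 < (Finset.univ.filter (fun q => b q = b p)).card :=
      Finset.card_pos.mpr ⟨p, by simp⟩
    rw [h] at h1
    obtain ⟨q, hq⟩ := Finset.card_pos.mp h1
    exact ⟨q, (Finset.mem_filter.mp hq).2⟩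
  have hbinj : Function.Injective b := by
    intro p p' hpp
    by_contra hne
    have h2 : 1 < (Finset.univ.filter (fun q => b q = b p)).card :=
      Finset.one_lt_card.mpr ⟨p, by simp, p', by simp [hpp], hne⟩
    have h := congrFun hwt (b p)
    unfold wtOf at h
    rw [h] at h2
    have := wt_le_one hm (b p)
    unfold wtOf at this
    omega
  have hparts : ∀ t : Fin f, 2*(t:ℕ) < 2*f ∧ 2*(t:ℕ)+1 < 2*f := fun t => by
    have := t.isLt; omega
  have hsum : ∀ t : Fin f,
      ((b ⟨2*(t:ℕ), (hparts t).1⟩ : ℕ)) + ((b ⟨2*(t:ℕ)+1, (hparts t).2⟩ : ℕ)) + 1 = 2*m := by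
    intro t
    have h := heps t (hparts t).1 (hparts t).2
    unfold epsZ at h
    by_cases hc : ((b ⟨2*(t:ℕ), (hparts t).1⟩ : ℕ)) + ((b ⟨2*(t:ℕ)+1, (hparts t).2⟩ : ℕ)) + 1 = 2*m
    · exact hc
    · rw [if_neg hc] at h; exact absurd rfl h
  have hrange : ∀ t : Fin f,
      (f ≤ ((b ⟨2*(t:ℕ), (hparts t).1⟩ : ℕ)) ∧ ((b ⟨2*(t:ℕ), (hparts t).1⟩ : ℕ)) < 2*f) ∨
      (2*m - 2*f ≤ ((b ⟨2*(t:ℕ), (hparts t).1⟩ : ℕ)) ∧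
        ((b ⟨2*(t:ℕ), (hparts t).1⟩ : ℕ)) < 2*m - f) := by
    intro t
    obtain ⟨q, hq⟩ := hocc ⟨2*(t:ℕ), (hparts t).1⟩
    have hv : ((cHatIdx m f hm q : ℕ)) = ((b ⟨2*(t:ℕ), (hparts t).1⟩ : ℕ)) := congrArg _ hq
    rw [cHat_val] at hv
    have hql := q.isLt
    rcases Nat.mod_two_eq_zero_or_one (q:ℕ) with h1 | h1 <;> simp only [h1] at hv <;>
      simp at hv <;> omega
  have hur : ∀ t : Fin f,
      f ≤ (if ((b ⟨2*(t:ℕ), (hparts t).1⟩ : ℕ)) < m then ((b ⟨2*(t:ℕ), (hparts t).1⟩ : ℕ))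
            else 2*m - 1 - ((b ⟨2*(t:ℕ), (hparts t).1⟩ : ℕ))) ∧
      (if ((b ⟨2*(t:ℕ), (hparts t).1⟩ : ℕ)) < m then ((b ⟨2*(t:ℕ), (hparts t).1⟩ : ℕ))
            else 2*m - 1 - ((b ⟨2*(t:ℕ), (hparts t).1⟩ : ℕ))) < 2*f := by
    intro t
    rcases hrange t with h | h <;> split <;> omega
  set σ0 : Fin f → Fin f := fun t =>
    ⟨(if ((b ⟨2*(t:ℕ), (hparts t).1⟩ : ℕ)) < m then ((b ⟨2*(t:ℕ), (hparts t).1⟩ : ℕ))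
        else 2*m - 1 - ((b ⟨2*(t:ℕ), (hparts t).1⟩ : ℕ))) - f,
      by have := (hur t).2; omega⟩ with hσ0
  set s : Fin f → Bool := fun t => decide (m ≤ ((b ⟨2*(t:ℕ), (hparts t).1⟩ : ℕ))) with hs
  have hinj : Function.Injective σ0 := by
    intro t t' h
    rw [hσ0] at h
    simp only [Fin.mk.injEq] at h
    have h1 := hur t; have h2 := hur t'
    have hb1 := (b ⟨2*(t:ℕ), (hparts t).1⟩).isLt
    have hb2 := (b ⟨2*(t':ℕ), (hparts t').1⟩).isLt
    have h5 := hsum t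
    have h5' := hsum t'
    by_cases hc : ((b ⟨2*(t:ℕ), (hparts t).1⟩ : ℕ)) = ((b ⟨2*(t':ℕ), (hparts t').1⟩ : ℕ))
    · have := hbinj (Fin.ext hc : b _ = b _)
      simp only [Fin.mk.injEq] at this
      apply Fin.ext
      omega
    · exfalso
      rcases Nat.lt_or_ge ((b ⟨2*(t:ℕ), (hparts t).1⟩ : ℕ)) m with hd | hd <;>
        rcases Nat.lt_or_ge ((b ⟨2*(t':ℕ), (hparts t').1⟩ : ℕ)) m with hd' | hd'
      · rw [if_pos hd, if_pos hd'] at h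
        split at h1 <;> split at h2 <;> omega
      · rw [if_pos hd, if_neg (by omega)] at h
        have h6 : ((b ⟨2*(t:ℕ), (hparts t).1⟩ : ℕ)) = ((b ⟨2*(t':ℕ)+1, (hparts t').2⟩ : ℕ)) := by
          split at h1 <;> split at h2 <;> omega
        have := hbinj (Fin.ext h6 : b _ = b _)
        simp only [Fin.mk.injEq] at this
        omega
      · rw [if_neg (by omega), if_pos hd'] at h
        have h6 : ((b ⟨2*(t':ℕ), (hparts t').1⟩ : ℕ)) = ((b ⟨2*(t:ℕ)+1, (hparts t).2⟩ : ℕ)) := by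
          split at h1 <;> split at h2 <;> omega
        have := hbinj (Fin.ext h6 : b _ = b _)
        simp only [Fin.mk.injEq] at this
        omega
      · rw [if_neg (by omega), if_neg (by omega)] at h
        split at h1 <;> split at h2 <;> omega
  set σ : Equiv.Perm (Fin f) := Equiv.ofBijective σ0 (Finite.injective_iff_bijective.mp hinj)
    with hσ
  refine ⟨σ, s, ?_⟩
  funext p
  have hp := p.isLt
  have hdiv : (p:ℕ)/2 < f := by omega
  set t : Fin f := ⟨(p:ℕ)/2, hdiv⟩ with ht
  have hσval : ((σ t : Fin f) : ℕ) =
      (if ((b ⟨2*(t:ℕ), (hparts t).1⟩ : ℕ)) < m then ((b ⟨2*(t:ℕ), (hparts t).1⟩ : ℕ))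
        else 2*m - 1 - ((b ⟨2*(t:ℕ), (hparts t).1⟩ : ℕ))) - f := rfl
  have hsval : s t = decide (m ≤ ((b ⟨2*(t:ℕ), (hparts t).1⟩ : ℕ))) := rfl
  have h1 := hur t
  have hb1 := (b ⟨2*(t:ℕ), (hparts t).1⟩).isLt
  have hsum1 := hsum t
  apply Fin.ext
  rcases Nat.mod_two_eq_zero_or_one (p:ℕ) with h | h
  · have hpe : p = ⟨2*(t:ℕ), (hparts t).1⟩ := by
      apply Fin.ext; simp only [Fin.val_mk, ht]; omega
    have e2 : (cHatIdx m f hm (psiOf f σ s p) : ℕ) =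
        if s t then 2*m - 1 - (f + ((σ t : Fin f):ℕ)) else f + ((σ t : Fin f):ℕ) := by
      rw [hpe]
      exact cHat_psiOf_even hm σ s t (hparts t).1
    rw [Function.comp_apply, e2, hσval, hsval]
    conv_lhs => rw [hpe]
    simp only [decide_eq_true_eq]
    simp only [ht, Fin.val_mk] at h1 hsum1 hb1 ⊢
    split at h1 <;> split <;> omega
  · have hpe : p = ⟨2*(t:ℕ)+1, (hparts t).2⟩ := by
      apply Fin.ext; simp only [Fin.val_mk, ht]; omega
    have e2 : (cHatIdx m f hm (psiOf f σ s p) : ℕ) =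
        if s t then f + ((σ t : Fin f):ℕ) else 2*m - 1 - (f + ((σ t : Fin f):ℕ)) := by
      rw [hpe]
      exact cHat_psiOf_odd hm σ s t (hparts t).2
    rw [Function.comp_apply, e2, hσval, hsval]
    conv_lhs => rw [hpe]
    simp only [decide_eq_true_eq]
    simp only [ht, Fin.val_mk] at h1 hsum1 hb1 ⊢
    split at h1 <;> split <;> omega


lemma funMap_apply (R : Type) [CommRing R] (α β : Type) [Fintype α]
    (M : β → α → R) (w : α → R) (b : β) :
    funMap R α β M w b = ∑ a, M b a * w a := rfl

/-- the sign factor attached to the pair `t` -/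
def pairX (K : Type) [Field K] (m f : ℕ) (b c : Fin (2*f) → Fin (2*m)) (t : Fin f) : K :=
  (-((epsZ m (b ⟨2*(t:ℕ), by have := t.isLt; omega⟩) (b ⟨2*(t:ℕ)+1, by have := t.isLt; omega⟩) : ℤ) : K)) *
  ((epsZ m (c ⟨2*(t:ℕ), by have := t.isLt; omega⟩) (c ⟨2*(t:ℕ)+1, by have := t.isLt; omega⟩) : ℤ) : K)

lemma pairX_eq (K : Type) [Field K] (m f : ℕ) (b c : Fin (2*f) → Fin (2*m)) (t : Fin f)
    (x y : Fin (2*f)) (hx : (x:ℕ) = 2*(t:ℕ)) (hy : (y:ℕ) = 2*(t:ℕ)+1) :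
    pairX K m f b c t =
      (-((epsZ m (b x) (b y) : ℤ) : K)) * ((epsZ m (c x) (c y) : ℤ) : K) := by
  have h1 : x = ⟨2*(t:ℕ), by have := t.isLt; omega⟩ := Fin.ext hx
  have h2 : y = ⟨2*(t:ℕ)+1, by have := t.isLt; omega⟩ := Fin.ext hy
  rw [h1, h2]
  rfl

/-- partial application of `e_{2k} ⋯ e_{2f-2}` to `v_c`. -/
def Hfun (K : Type) [Field K] (m f : ℕ) (c : Fin (2*f) → Fin (2*m)) (k : ℕ) : Ten K m (2*f) :=
  fun b => (if ∀ p : Fin (2*f), (p:ℕ) < 2*k → b p = c p then (1:K) else 0) *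
    ∏ t : Fin f, (if k ≤ (t:ℕ) then pairX K m f b c t else 1)

lemma Hfun_top (K : Type) [Field K] (m f : ℕ) (c : Fin (2*f) → Fin (2*m)) :
    Hfun K m f c f = dta K m (2*f) c := by
  funext b
  unfold Hfun dta
  have h1 : (∏ t : Fin f, (if f ≤ (t:ℕ) then pairX K m f b c t else 1)) = 1 := by
    apply Finset.prod_eq_one
    intro t _
    rw [if_neg (by have := t.isLt; omega)]
  rw [h1, mul_one]
  apply if_congr _ rfl rfl
  constructor
  · intro h
    funext p
    exact h p (by have := p.isLt; omega)
  · intro h p _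
    rw [h]

lemma eOp_Hfun (K : Type) [Field K] (m f : ℕ) (c : Fin (2*f) → Fin (2*m)) (k : ℕ)
    (hk : k < f) (hj : 2*k < 2*f - 1) :
    eOp K m (2*f) ⟨2*k, hj⟩ (Hfun K m f c (k+1)) = Hfun K m f c k := by
  have hj0 : 2*k < 2*f := by omega
  have hj1 : 2*k+1 < 2*f := by omega
  funext a
  have happ : eOp K m (2*f) ⟨2*k, hj⟩ (Hfun K m f c (k+1)) a =
      ∑ b : Fin (2*f) → Fin (2*m),
        ((if ∀ p : Fin (2*f), p ≠ (⟨2*k, hj0⟩ : Fin (2*f)) → p ≠ (⟨2*k+1, hj1⟩ : Fin (2*f)) →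
            b p = a p then (1:K) else 0) *
          (-((epsZ m (a ⟨2*k, hj0⟩) (a ⟨2*k+1, hj1⟩) : ℤ) : K)) *
          ((epsZ m (b ⟨2*k, hj0⟩) (b ⟨2*k+1, hj1⟩) : ℤ) : K)) *
            Hfun K m f c (k+1) b := rfl
  rw [happ]
  set b0 : Fin (2*f) → Fin (2*m) := fun p =>
    if p = (⟨2*k, hj0⟩ : Fin (2*f)) then c ⟨2*k, hj0⟩
    else if p = (⟨2*k+1, hj1⟩ : Fin (2*f)) then c ⟨2*k+1, hj1⟩ else a p with hb0
  have hb0j0 : b0 ⟨2*k, hj0⟩ = c ⟨2*k, hj0⟩ := by rw [hb0]; simp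
  have hb0j1 : b0 ⟨2*k+1, hj1⟩ = c ⟨2*k+1, hj1⟩ := by
    rw [hb0]; simp [Fin.ext_iff]
  have hb0off : ∀ p : Fin (2*f), p ≠ (⟨2*k, hj0⟩ : Fin (2*f)) →
      p ≠ (⟨2*k+1, hj1⟩ : Fin (2*f)) → b0 p = a p := by
    intro p h0 h1
    rw [hb0]
    simp only []
    rw [if_neg h0, if_neg h1]
  rw [Finset.sum_eq_single_of_mem b0 (Finset.mem_univ b0) ?_]
  · -- main term
    rw [if_pos hb0off, hb0j0, hb0j1]
    unfold Hfun
    -- indicator transformation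
    have hind : (if ∀ p : Fin (2*f), (p:ℕ) < 2*(k+1) → b0 p = c p then (1:K) else 0)
        = (if ∀ p : Fin (2*f), (p:ℕ) < 2*k → a p = c p then (1:K) else 0) := by
      apply if_congr _ rfl rfl
      constructor
      · intro h p hp
        have hne0 : p ≠ (⟨2*k, hj0⟩ : Fin (2*f)) := by
          intro hh; rw [hh] at hp; simp only [Fin.val_mk] at hp; omega
        have hne1 : p ≠ (⟨2*k+1, hj1⟩ : Fin (2*f)) := by
          intro hh; rw [hh] at hp; simp only [Fin.val_mk] at hp; omega
        rw [← hb0off p hne0 hne1]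
        exact h p (by omega)
      · intro h p hp
        by_cases h0 : p = (⟨2*k, hj0⟩ : Fin (2*f))
        · rw [h0, hb0j0]
        · by_cases h1 : p = (⟨2*k+1, hj1⟩ : Fin (2*f))
          · rw [h1, hb0j1]
          · rw [hb0off p h0 h1]
            apply h
            have hv0 : (p:ℕ) ≠ 2*k := fun hh => h0 (Fin.ext hh)
            have hv1 : (p:ℕ) ≠ 2*k+1 := fun hh => h1 (Fin.ext hh)
            omega
    rw [hind]
    -- product transformation
    have hprod : (∏ t : Fin f, (if k+1 ≤ (t:ℕ) then pairX K m f b0 c t else 1))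
        = (∏ t : Fin f, (if k+1 ≤ (t:ℕ) then pairX K m f a c t else 1)) := by
      apply Finset.prod_congr rfl
      intro t _
      by_cases ht : k+1 ≤ (t:ℕ)
      · rw [if_pos ht, if_pos ht]
        have := t.isLt
        unfold pairX
        rw [hb0off ⟨2*(t:ℕ), by omega⟩
            (by simp only [Ne, Fin.ext_iff, Fin.val_mk]; omega)
            (by simp only [Ne, Fin.ext_iff, Fin.val_mk]; omega),
          hb0off ⟨2*(t:ℕ)+1, by omega⟩
            (by simp only [Ne, Fin.ext_iff, Fin.val_mk]; omega)
            (by simp only [Ne, Fin.ext_iff, Fin.val_mk]; omega)]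
      · rw [if_neg ht, if_neg ht]
    rw [hprod]
    -- split off the t = k factor on the RHS
    have hsplit : ∀ t : Fin f, (if k ≤ (t:ℕ) then pairX K m f a c t else 1)
        = (if t = (⟨k, hk⟩ : Fin f) then pairX K m f a c t else 1) *
          (if k+1 ≤ (t:ℕ) then pairX K m f a c t else 1) := by
      intro t
      rcases lt_trichotomy (t:ℕ) k with h | h | h
      · rw [if_neg (by omega),
          if_neg (by intro hh; rw [hh] at h; simp only [Fin.val_mk] at h; omega),
          if_neg (by omega), mul_one]
      · rw [if_pos (by omega),
          if_pos (by apply Fin.ext; simp only [Fin.val_mk]; omega),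
          if_neg (by omega), mul_one]
      · rw [if_pos (by omega),
          if_neg (by intro hh; rw [hh] at h; simp only [Fin.val_mk] at h; omega),
          if_pos (by omega), one_mul]
    rw [Finset.prod_congr rfl (fun t _ => hsplit t), Finset.prod_mul_distrib,
      Finset.prod_ite_eq' Finset.univ (⟨k, hk⟩ : Fin f) (pairX K m f a c)]
    rw [if_pos (Finset.mem_univ _)]
    rw [pairX_eq K m f a c ⟨k, hk⟩ ⟨2*k, hj0⟩ ⟨2*k+1, hj1⟩ (by simp) (by simp)]
    ring
  · -- other terms vanish
    intro b _ hbne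
    by_cases hoff : ∀ p : Fin (2*f), p ≠ (⟨2*k, hj0⟩ : Fin (2*f)) →
        p ≠ (⟨2*k+1, hj1⟩ : Fin (2*f)) → b p = a p
    · have hnind : ¬ (∀ p : Fin (2*f), (p:ℕ) < 2*(k+1) → b p = c p) := by
        intro hall
        apply hbne
        funext p
        by_cases h0 : p = (⟨2*k, hj0⟩ : Fin (2*f))
        · rw [h0, hb0j0, ← hall ⟨2*k, hj0⟩ (by simp only [Fin.val_mk]; omega)]
        · by_cases h1 : p = (⟨2*k+1, hj1⟩ : Fin (2*f))
          · rw [h1, hb0j1, ← hall ⟨2*k+1, hj1⟩ (by simp only [Fin.val_mk]; omega)]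
          · rw [hb0off p h0 h1, hoff p h0 h1]
      have hH : Hfun K m f c (k+1) b = 0 := by
        unfold Hfun
        rw [if_neg hnind, zero_mul]
      rw [hH, mul_zero]
    · rw [if_neg hoff, zero_mul, zero_mul, zero_mul]

lemma prodE_Hfun (K : Type) [Field K] (m f : ℕ) (c : Fin (2*f) → Fin (2*m)) :
    ∀ (k : ℕ) (hk : k ≤ f),
      (List.ofFn fun i : Fin k =>
          eOp K m (2*f) ⟨2*(i:ℕ), by have := i.isLt; omega⟩).prod (Hfun K m f c k)
        = Hfun K m f c 0 := by
  intro k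
  induction k with
  | zero =>
      intro _
      simp only [List.ofFn_zero, List.prod_nil, Module.End.one_apply]
  | succ k ih =>
      intro hk
      rw [List.ofFn_succ', List.prod_concat, Module.End.mul_apply]
      have h1 : eOp K m (2*f)
          ⟨2*(((Fin.last k) : Fin (k+1)):ℕ), by
            have : (((Fin.last k) : Fin (k+1)):ℕ) = k := rfl
            omega⟩ (Hfun K m f c (k+1)) = Hfun K m f c k :=
        eOp_Hfun K m f c k (by omega) (by omega)
      rw [h1]
      exact ih (by omega)

lemma EfOp_dta (K : Type) [Field K] (m f : ℕ) (hf : 2*f ≤ 2*f) (c : Fin (2*f) → Fin (2*m)) :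
    EfOp K m (2*f) f hf (dta K m (2*f) c) = Hfun K m f c 0 := by
  unfold EfOp
  rw [← Hfun_top K m f c]
  exact prodE_Hfun K m f c f le_rfl



/-- the product of pair signs of a tensor index -/
def bSign (K : Type) [Field K] (m f : ℕ) (b : Fin (2*f) → Fin (2*m)) : K :=
  ∏ t : Fin f, ((epsZ m (b ⟨2*(t:ℕ), by have := t.isLt; omega⟩)
      (b ⟨2*(t:ℕ)+1, by have := t.isLt; omega⟩) : ℤ) : K)

lemma Hfun_zero_eval (K : Type) [Field K] (m f : ℕ) (c : Fin (2*f) → Fin (2*m))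
    (hc : ∀ (t : Fin f) (h0 : 2*(t:ℕ) < 2*f) (h1 : 2*(t:ℕ)+1 < 2*f),
      epsZ m (c ⟨2*(t:ℕ), h0⟩) (c ⟨2*(t:ℕ)+1, h1⟩) = 1) (b : Fin (2*f) → Fin (2*m)) :
    Hfun K m f c 0 b = (-1:K)^f * bSign K m f b := by
  unfold Hfun bSign
  rw [if_pos (by intro p hp; omega), one_mul]
  have h1 : ∀ t : Fin f, (if 0 ≤ (t:ℕ) then pairX K m f b c t else 1) =
      (-1:K) * ((epsZ m (b ⟨2*(t:ℕ), by have := t.isLt; omega⟩)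
        (b ⟨2*(t:ℕ)+1, by have := t.isLt; omega⟩) : ℤ) : K) := by
    intro t
    rw [if_pos (Nat.zero_le _)]
    unfold pairX
    rw [hc t (by have := t.isLt; omega) (by have := t.isLt; omega)]
    push_cast
    ring
  rw [Finset.prod_congr rfl (fun t _ => h1 t), Finset.prod_mul_distrib, Finset.prod_const]
  simp

lemma cIdx_eps (m n f : ℕ) (hfm : f ≤ m) (kk : Fin n → Fin (2*m)) (hn : n = 2*f)
    (t : Fin f) (h0 : 2*(t:ℕ) < n) (h1 : 2*(t:ℕ)+1 < n) :
    epsZ m (cIdx m n f hfm kk ⟨2*(t:ℕ), h0⟩) (cIdx m n f hfm kk ⟨2*(t:ℕ)+1, h1⟩) = 1 := by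
  have ht := t.isLt
  have v0 : ((cIdx m n f hfm kk ⟨2*(t:ℕ), h0⟩ : ℕ)) = (t:ℕ) := by
    unfold cIdx
    rw [dif_pos (by simp only [Fin.val_mk]; omega)]
    rw [if_pos (by simp only [Fin.val_mk]; omega)]
    simp only [Fin.val_mk]
    omega
  have v1 : ((cIdx m n f hfm kk ⟨2*(t:ℕ)+1, h1⟩ : ℕ)) = 2*m - 1 - (t:ℕ) := by
    unfold cIdx conjIdx
    rw [dif_pos (by simp only [Fin.val_mk]; omega)]
    rw [if_neg (by simp only [Fin.val_mk]; omega)]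
    simp only [Fin.val_mk]
    omega
  unfold epsZ
  rw [v0, v1, if_pos (by omega), if_pos (by omega)]

lemma bSign_good {K : Type} [Field K] {m f : ℕ} (hm : 2*f ≤ m) (σ : Equiv.Perm (Fin f))
    (s : Fin f → Bool) :
    bSign K m f (cHatIdx m f hm ∘ ⇑(psiOf f σ s)) =
      (-1:K)^((Finset.univ.filter (fun t => s t = true)).card) := by
  unfold bSign
  have h1 : ∀ t : Fin f, ((epsZ m ((cHatIdx m f hm ∘ ⇑(psiOf f σ s)) ⟨2*(t:ℕ), by have := t.isLt; omega⟩)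
      ((cHatIdx m f hm ∘ ⇑(psiOf f σ s)) ⟨2*(t:ℕ)+1, by have := t.isLt; omega⟩) : ℤ) : K) =
      if s t = true then (-1:K) else 1 := by
    intro t
    rw [Function.comp_apply, Function.comp_apply,
      eps_good hm σ s t (by have := t.isLt; omega) (by have := t.isLt; omega)]
    rcases s t <;> simp
  rw [Finset.prod_congr rfl (fun t _ => h1 t), Finset.prod_ite, Finset.prod_const,
    Finset.prod_const, one_pow, mul_one]

lemma permOp_dta_apply (K : Type) [Field K] (m n : ℕ) (π : Equiv.Perm (Fin n))
    (i : Fin n → Fin (2*m)) (a : Fin n → Fin (2*m)) :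
    permOp K m n π (dta K m n i) a =
      ((Equiv.Perm.sign π : ℤ) : K) * (if a ∘ ⇑π = i then 1 else 0) := by
  have h : permOp K m n π (dta K m n i) a =
      ∑ b : Fin n → Fin (2*m), (if b = a ∘ ⇑π then ((Equiv.Perm.sign π : ℤ) : K) else 0) *
        dta K m n i b := rfl
  rw [h, Finset.sum_eq_single_of_mem (a ∘ ⇑π) (Finset.mem_univ _) ?_]
  · rw [if_pos rfl]
    rfl
  · intro b _ hb
    rw [if_neg hb, zero_mul]


/-- Let `K` be a field, `m ≥ n`, `1 ≤ f ≤ ⌊n/2⌋`.  The weight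
component, for the weight `λ^{(1)}` of `v_ĉ`, of `v_c · (e_1e_3⋯e_{2f-1})` in `V^{⊗2f}`
equals `(-1)^f ∑_{ψ ∈ Ψ} v_ĉ · ψ`, where `Ψ` is the normalizer of `S_{(2^f)}`
in `S_{2f}`. -/
theorem weight_component_of_vc_Ef
    (K : Type) [Field K] (m n f : ℕ) (hmn : n ≤ m) (hf1 : 1 ≤ f) (hfn : 2*f ≤ n) :
    wcomp K m (2*f) (wtOf m (2*f) (cHatIdx m f (by omega)))
      ((EfOp K m (2*f) f (by omega))
        (dta K m (2*f) (cIdx m (2*f) f (by omega) (fun _ => ⟨0, by omega⟩))))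
    = ((-1 : K)^f) •
        ∑ ψ ∈ Finset.univ.filter (fun ψ => PsiP (2*f) f ψ),
          (permOp K m (2*f) ψ) (dta K m (2*f) (cHatIdx m f (by omega))) := by
  have hm2 : 2*f ≤ m := by omega
  have hfm : f ≤ m := by omega
  have hff : 2*f ≤ 2*f := le_rfl
  have h0m : (0:ℕ) < 2*m := by omega
  funext b
  show wcomp K m (2*f) (wtOf m (2*f) (cHatIdx m f hm2))
      ((EfOp K m (2*f) f hff) (dta K m (2*f) (cIdx m (2*f) f hfm (fun _ => ⟨0, h0m⟩)))) b
    = ((-1:K)^f • ∑ ψ ∈ Finset.univ.filter (fun ψ => PsiP (2*f) f ψ),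
        (permOp K m (2*f) ψ) (dta K m (2*f) (cHatIdx m f hm2))) b
  set c0 : Fin (2*f) → Fin (2*m) := cIdx m (2*f) f hfm (fun _ => ⟨0, h0m⟩) with hc0def
  -- LHS evaluation
  have hL : wcomp K m (2*f) (wtOf m (2*f) (cHatIdx m f hm2))
      ((EfOp K m (2*f) f hff) (dta K m (2*f) c0)) b
      = if wtOf m (2*f) b = wtOf m (2*f) (cHatIdx m f hm2)
          then (-1:K)^f * bSign K m f b else 0 := by
    have h1 : wcomp K m (2*f) (wtOf m (2*f) (cHatIdx m f hm2))
        ((EfOp K m (2*f) f hff) (dta K m (2*f) c0)) b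
        = if wtOf m (2*f) b = wtOf m (2*f) (cHatIdx m f hm2)
            then (EfOp K m (2*f) f hff) (dta K m (2*f) c0) b else 0 := rfl
    rw [h1, congrFun (EfOp_dta K m f hff c0) b,
      Hfun_zero_eval K m f c0 (fun t h0 h1' => cIdx_eps m (2*f) f hfm _ rfl t h0 h1') b]
  rw [hL]
  -- RHS evaluation
  have hR : ((-1:K)^f • ∑ ψ ∈ Finset.univ.filter (fun ψ => PsiP (2*f) f ψ),
        (permOp K m (2*f) ψ) (dta K m (2*f) (cHatIdx m f hm2))) b
      = (-1:K)^f * ∑ ψ ∈ Finset.univ.filter (fun ψ => PsiP (2*f) f ψ),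
          ((Equiv.Perm.sign ψ : ℤ) : K) * (if b ∘ ⇑ψ = cHatIdx m f hm2 then 1 else 0) := by
    rw [Pi.smul_apply, Finset.sum_apply, smul_eq_mul]
    congr 1
    exact Finset.sum_congr rfl (fun ψ _ => permOp_dta_apply K m (2*f) ψ _ b)
  rw [hR]
  by_cases hgood : ∃ σ s, b = cHatIdx m f hm2 ∘ ⇑(psiOf f σ s)
  · obtain ⟨σ, s, rfl⟩ := hgood
    rw [if_pos (wtOf_comp_perm (cHatIdx m f hm2) (psiOf f σ s))]
    rw [bSign_good hm2 σ s]
    have hmem : (psiOf f σ s)⁻¹ ∈ Finset.univ.filter (fun ψ => PsiP (2*f) f ψ) :=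
      Finset.mem_filter.mpr ⟨Finset.mem_univ _,
        psiP_of_pairPres (pairPres_inv (pairPres_psiOf f σ s))⟩
    have hsum : (∑ ψ ∈ Finset.univ.filter (fun ψ => PsiP (2*f) f ψ),
        ((Equiv.Perm.sign ψ : ℤ) : K) *
          (if (cHatIdx m f hm2 ∘ ⇑(psiOf f σ s)) ∘ ⇑ψ = cHatIdx m f hm2 then 1 else 0))
        = ((Equiv.Perm.sign (psiOf f σ s)⁻¹ : ℤ) : K) := by
      rw [Finset.sum_eq_single_of_mem ((psiOf f σ s)⁻¹) hmem ?_]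
      · rw [if_pos ?_, mul_one]
        funext x
        simp [Function.comp_apply, Equiv.Perm.coe_inv, Equiv.apply_symm_apply]
      · intro ψ _ hne
        rw [if_neg ?_, mul_zero]
        intro hcond
        apply hne
        apply Equiv.ext
        intro x
        have h2 := congrFun hcond x
        simp only [Function.comp_apply] at h2
        have h3 : psiOf f σ s (ψ x) = x := cHat_inj hm2 h2
        have h4 := congrArg (⇑(psiOf f σ s)⁻¹) h3
        simpa using h4
    rw [hsum]
    have hsign : ((Equiv.Perm.sign (psiOf f σ s)⁻¹ : ℤ) : K)
        = (-1:K)^((Finset.univ.filter (fun t => s t = true)).card) := by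
      rw [map_inv, psiOf_sign]
      rw [← inv_pow]
      norm_num
    rw [hsign]
  · -- bad case : both sides vanish
    have hzero : ∀ ψ ∈ Finset.univ.filter (fun ψ => PsiP (2*f) f ψ),
        ((Equiv.Perm.sign ψ : ℤ) : K) * (if b ∘ ⇑ψ = cHatIdx m f hm2 then 1 else 0) = 0 := by
      intro ψ hmem
      by_cases hcond : b ∘ ⇑ψ = cHatIdx m f hm2
      · exfalso
        have hb : b = cHatIdx m f hm2 ∘ ⇑ψ⁻¹ := by
          funext x
          have h2 := congrFun hcond (ψ⁻¹ x)
          simp only [Function.comp_apply, Equiv.Perm.coe_inv, Equiv.apply_symm_apply] at h2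
          simp only [Function.comp_apply]
          exact h2
        have hpp : PairPres f ψ⁻¹ :=
          pairPres_inv (pairPres_of_psiP (Finset.mem_filter.mp hmem).2)
        obtain ⟨σ, s, heq⟩ := exists_psiOf hpp
        exact hgood ⟨σ, s, by rw [hb, heq]⟩
      · rw [if_neg hcond, mul_zero]
    rw [Finset.sum_eq_zero hzero, mul_zero]
    by_cases hwt : wtOf m (2*f) b = wtOf m (2*f) (cHatIdx m f hm2)
    · rw [if_pos hwt]
      suffices hP : bSign K m f b = 0 by rw [hP, mul_zero]
      by_contra hP
      have heach := Finset.prod_ne_zero_iff.mp hP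
      apply hgood
      apply good_of_wt_eps hm2 b hwt
      intro t h0 h1 hz
      apply heach t (Finset.mem_univ t)
      rw [show epsZ m (b ⟨2*(t:ℕ), by have := t.isLt; omega⟩)
          (b ⟨2*(t:ℕ)+1, by have := t.isLt; omega⟩) = 0 from hz, Int.cast_zero]
    · rw [if_neg hwt]

end SpBrauer
end
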